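/- Let N ≥ 1, let f, g : ℝ^N → ℝ be differentiable at a point x with f(x)² + g(x)² > 0, and set h(y) := √((f(y)² + g(y)²)/2). Then h is differentiable at x and ‖∇h(x)‖² ≤ (1/2)(‖∇f(x)‖² + ‖∇g(x)‖²), where ∇ denotes the gradient. -/

import Mathlib

set_option maxHeartbeats 1000000

lemma norm_gradient_eq {N : ℕ} (f : EuclideanSpace ℝ (Fin N) → ℝ) (x : EuclideanSpace ℝ (Fin N)) :
    ‖gradient f x‖ = ‖fderiv ℝ f x‖ := by
  rw [gradient]
  exact (InnerProductSpace.toDual ℝ (EuclideanSpace ℝ (Fin N))).symm.norm_map _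

/-- If `f, g : ℝ^N → ℝ` are differentiable at `x` with `f(x)² + g(x)² > 0`, and
`h(y) := √((f(y)² + g(y)²)/2)`, then `h` is differentiable at `x` and
`‖∇h(x)‖² ≤ ½(‖∇f(x)‖² + ‖∇g(x)‖²)`. -/
theorem gradient_sqrt_mean_square_le (N : ℕ) (hN : 1 ≤ N)
    (f g : EuclideanSpace ℝ (Fin N) → ℝ) (x : EuclideanSpace ℝ (Fin N))
    (hf : DifferentiableAt ℝ f x) (hg : DifferentiableAt ℝ g x)
    (hpos : 0 < f x ^ 2 + g x ^ 2) :
    DifferentiableAt ℝ (fun y => Real.sqrt ((f y ^ 2 + g y ^ 2) / 2)) x ∧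
      ‖gradient (fun y => Real.sqrt ((f y ^ 2 + g y ^ 2) / 2)) x‖ ^ 2 ≤
        (1 / 2) * (‖gradient f x‖ ^ 2 + ‖gradient g x‖ ^ 2) := by
  set Ff := fderiv ℝ f x with hFf
  set Fg := fderiv ℝ g x with hFg
  set D : EuclideanSpace ℝ (Fin N) →L[ℝ] ℝ := f x • Ff + g x • Fg with hD
  have hφ' : HasFDerivAt (fun y => (f y ^ 2 + g y ^ 2) / 2) D x := by
    have h1 : HasFDerivAt (fun y => f y * f y + g y * g y)
        ((f x • Ff + f x • Ff) + (g x • Fg + g x • Fg)) x :=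
      (hf.hasFDerivAt.mul hf.hasFDerivAt).add (hg.hasFDerivAt.mul hg.hasFDerivAt)
    have h2 := h1.const_smul ((1 : ℝ) / 2)
    have heq : (fun y => ((1 : ℝ) / 2) • (f y * f y + g y * g y)) =
        fun y => (f y ^ 2 + g y ^ 2) / 2 := by
      funext y; simp [smul_eq_mul]; ring
    have heq2 : ((1 : ℝ) / 2) • ((f x • Ff + f x • Ff) + (g x • Fg + g x • Fg)) = D := by
      ext y
      simp [hD, smul_eq_mul]
      ring
    rw [← heq, ← heq2]
    exact h2
  have hφx : (f x ^ 2 + g x ^ 2) / 2 ≠ 0 := by positivity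
  have h' := hφ'.sqrt hφx
  refine ⟨h'.differentiableAt, ?_⟩
  set s := Real.sqrt ((f x ^ 2 + g x ^ 2) / 2) with hsdef
  have hs : (0 : ℝ) < s := Real.sqrt_pos.mpr (by positivity)
  have hs2 : s ^ 2 = (f x ^ 2 + g x ^ 2) / 2 := Real.sq_sqrt (by positivity)
  rw [norm_gradient_eq, norm_gradient_eq, norm_gradient_eq, h'.fderiv]
  set a := ‖Ff‖
  set b := ‖Fg‖
  have ha : 0 ≤ a := norm_nonneg _
  have hb : 0 ≤ b := norm_nonneg _
  have hDle : ‖D‖ ≤ |f x| * a + |g x| * b := by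
    calc ‖D‖ ≤ ‖f x • Ff‖ + ‖g x • Fg‖ := norm_add_le _ _
      _ = |f x| * a + |g x| * b := by simp [norm_smul, Real.norm_eq_abs]; rfl
  have hnorm : ‖(1 / (2 * s)) • D‖ ≤ (1 / (2 * s)) * (|f x| * a + |g x| * b) := by
    rw [norm_smul (1 / (2 * s)) D, Real.norm_eq_abs, abs_of_pos (by positivity : (0:ℝ) < 1 / (2 * s))]
    gcongr
  have hsq : ‖(1 / (2 * s)) • D‖ ^ 2 ≤ ((1 / (2 * s)) * (|f x| * a + |g x| * b)) ^ 2 :=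
    pow_le_pow_left₀ (norm_nonneg _) hnorm 2
  refine hsq.trans ?_
  have hcs : (|f x| * a + |g x| * b) ^ 2 ≤ (f x ^ 2 + g x ^ 2) * (a ^ 2 + b ^ 2) := by
    nlinarith [sq_nonneg (|f x| * b - |g x| * a), sq_abs (f x), sq_abs (g x),
      abs_nonneg (f x), abs_nonneg (g x)]
  have h4 : (1 / (2 * s)) ^ 2 = 1 / (2 * (f x ^ 2 + g x ^ 2)) := by
    have : (2 * s) ^ 2 = 2 * (f x ^ 2 + g x ^ 2) := by
      rw [mul_pow, hs2]; ring
    rw [div_pow, one_pow, this]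
  rw [mul_pow, h4, div_mul_eq_mul_div, one_mul, div_le_iff₀ (by positivity)]
  calc (|f x| * a + |g x| * b) ^ 2 ≤ (f x ^ 2 + g x ^ 2) * (a ^ 2 + b ^ 2) := hcs
    _ = 1 / 2 * (a ^ 2 + b ^ 2) * (2 * (f x ^ 2 + g x ^ 2)) := by ring
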